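/- Let Z be a Parisian walk with deterministic starting point Z_0, and suppose the filtration is the natural filtration of Z, i.e. ℱ_t = σ(Z_0, …, Z_t). Fix t ∈ ℕ and for S = (s_1, …, s_t) ∈ {1, ζ, ζ²}^t define ΔZ_S := ∏_{i : s_i = ζ} ΔZ_i · ∏_{i : s_i = ζ²} conj(ΔZ_i), where ΔZ_i := Z_i − Z_{i−1}. Then the family {ΔZ_S : S ∈ {1, ζ, ζ²}^t} is an orthonormal basis of the complex Hilbert space L²(Ω, ℱ_t, P; ℂ); in particular this space has dimension 3^t. -/

import Mathlib

open MeasureTheory Complex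
open scoped Classical

noncomputable section

namespace Parisian

/-- The primitive cube root of unity `ζ = (−1 + √3·i)/2`. -/
def zeta : ℂ := (-1 + Real.sqrt 3 * Complex.I) / 2

/-- The lattice `ℤ[ζ] = {a + bζ : a, b ∈ ℤ}` as a subset of `ℂ`. -/
def Zlat : Set ℂ := {z | ∃ a b : ℤ, z = (a : ℂ) + (b : ℂ) * zeta}

/-- The set of admissible steps `{1, ζ, ζ²}`. -/
def steps : Set ℂ := {1, zeta, zeta ^ 2}

/-- The set `P = {0, 1, 1 + ζ}`. -/
def Pset : Set ℂ := {0, 1, 1 + zeta}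

/-- Graph distance from the set `P` in `ℤ[ζ]`: the least `n` such that
`z = p + w₁ + ⋯ + w_n` with `p ∈ P` and each `wᵢ ∈ {1, ζ, ζ²}`. -/
def gdist (z : ℂ) : ℕ :=
  sInf {n : ℕ | ∃ p ∈ Pset, ∃ w : Fin n → ℂ, (∀ i, w i ∈ steps) ∧ z = p + ∑ i, w i}

def A1 : Set ℂ := {z | ∃ k1 k2 : ℤ, z = (k1 : ℂ) + (k2 : ℂ) * zeta ^ 2 ∧ 1 < k2 + 1 ∧ k2 + 1 < k1}
def A2 : Set ℂ := {z | ∃ k1 k2 : ℤ, z = -(k1 : ℂ) * zeta - (k2 : ℂ) ∧ 0 ≤ k2 ∧ k2 < k1}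
def A3 : Set ℂ := {z | ∃ k1 k2 : ℤ, z = -(k1 : ℂ) - (k2 : ℂ) * zeta ∧ 0 < k2 ∧ k2 < k1}
def A4 : Set ℂ := {z | ∃ k1 k2 : ℤ, z = (k1 : ℂ) * zeta + (k2 : ℂ) * zeta ^ 2 ∧ 0 ≤ k2 ∧ k2 < k1}
def A5 : Set ℂ := {z | ∃ k1 k2 : ℤ, z = -(k1 : ℂ) * zeta ^ 2 - (k2 : ℂ) ∧ 1 < k2 + 1 ∧ k2 + 1 < k1}
def A6 : Set ℂ := {z | ∃ k1 k2 : ℤ, z = (k1 : ℂ) + (k2 : ℂ) * zeta ∧ 0 < k2 ∧ k2 < k1}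

def B1 : Set ℂ := {z | ∃ n : ℤ, z = (n : ℂ) ∧ 2 ≤ n}
def B2 : Set ℂ := {z | ∃ n : ℤ, z = (n : ℂ) * zeta - zeta ^ 2 ∧ 1 ≤ n}
def B3 : Set ℂ := {z | ∃ n : ℤ, z = (n : ℂ) * zeta ^ 2 ∧ 1 ≤ n}
def B4 : Set ℂ := {z | ∃ n : ℤ, z = (n : ℂ) ∧ n ≤ -1}
def B5 : Set ℂ := {z | ∃ n : ℤ, z = 1 + (n : ℂ) * zeta ∧ n ≤ -1}
def B6 : Set ℂ := {z | ∃ n : ℤ, z = (n : ℂ) * zeta ^ 2 ∧ n ≤ -2}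

/-- The closure `Ā₁ = A₁ ∪ B₁ ∪ B₅ ∪ {1}`. -/
def Abar1 : Set ℂ := A1 ∪ B1 ∪ B5 ∪ {1}
/-- The closure `Ā₃ = A₃ ∪ B₃ ∪ B₄ ∪ {0}`. -/
def Abar3 : Set ℂ := A3 ∪ B3 ∪ B4 ∪ {0}
/-- The closure `Ā₅ = A₅ ∪ B₂ ∪ B₆ ∪ {1+ζ}`. -/
def Abar5 : Set ℂ := A5 ∪ B2 ∪ B6 ∪ {1 + zeta}

/-- `φ(z) = 1_{Ā₁}(z) + ζ·1_{Ā₃}(z) + ζ²·1_{Ā₅}(z)`. -/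
def phi (z : ℂ) : ℂ :=
  Abar1.indicator 1 z + zeta * Abar3.indicator 1 z + zeta ^ 2 * Abar5.indicator 1 z

/-- `ψ(z) = 1_{A₆}(z) + ζ·1_{A₄}(z) + ζ²·1_{A₂}(z)`. -/
def psi (z : ℂ) : ℂ :=
  A6.indicator 1 z + zeta * A4.indicator 1 z + zeta ^ 2 * A2.indicator 1 z

variable {Ω : Type*} {mΩ : MeasurableSpace Ω}

/-- A Parisian walk: an adapted integrable martingale starting in `ℤ[ζ]` a.s.,
with increments in `{1, ζ, ζ²}` a.s. -/
def IsParisian (μ : Measure Ω) (ℱ : Filtration ℕ mΩ) (Z : ℕ → Ω → ℂ) : Prop :=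
  Martingale Z ℱ μ ∧ (∀ᵐ ω ∂μ, Z 0 ω ∈ Zlat) ∧
    ∀ t : ℕ, ∀ᵐ ω ∂μ, Z (t + 1) ω - Z t ω ∈ steps

/-- The local time of a walk: the number of exits from `Ā₁`, `Ā₃`, `Ā₅` before time `t`. -/
def localTime (Z : ℕ → Ω → ℂ) (t : ℕ) (ω : Ω) : ℕ :=
  ∑ u ∈ Finset.range t,
    ((if Z u ω ∈ Abar1 ∧ Z (u + 1) ω ∉ Abar1 then 1 else 0) +
     (if Z u ω ∈ Abar3 ∧ Z (u + 1) ω ∉ Abar3 then 1 else 0) +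
     (if Z u ω ∈ Abar5 ∧ Z (u + 1) ω ∉ Abar5 then 1 else 0))

/-- `ΔZ_S = ∏_{i : sᵢ = ζ} ΔZᵢ · ∏_{i : sᵢ = ζ²} conj(ΔZᵢ)` where `ΔZᵢ = Zᵢ − Z_{i−1}`,
for a tuple `S : Fin t → ℂ` (with entries in `{1, ζ, ζ²}`). -/
def deltaZS (Z : ℕ → Ω → ℂ) (t : ℕ) (S : Fin t → ℂ) (ω : Ω) : ℂ :=
  ∏ i : Fin t,
    (if S i = zeta then Z ((i : ℕ) + 1) ω - Z (i : ℕ) ω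
     else if S i = zeta ^ 2 then starRingEnd ℂ (Z ((i : ℕ) + 1) ω - Z (i : ℕ) ω)
     else 1)

end Parisian

namespace Parisian

/-- Enumeration of `{1, ζ, ζ²}` by `Fin 3`. -/
def trip : Fin 3 → ℂ := ![1, zeta, zeta ^ 2]

section Aux
variable {Ω : Type*} {mΩ : MeasurableSpace Ω}

lemma zeta_key : zeta ^ 2 + zeta + 1 = 0 := by
  have h3 : (Real.sqrt 3 : ℂ) ^ 2 = 3 := by
    norm_cast
    rw [Real.sq_sqrt]; norm_num
  simp only [zeta]
  linear_combination ((Real.sqrt 3 : ℂ) ^ 2 / 4) * Complex.I_sq - h3 / 4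

lemma zeta_cube : zeta ^ 3 = 1 := by linear_combination (zeta - 1) * zeta_key

lemma conj_zeta : (starRingEnd ℂ) zeta = zeta ^ 2 := by
  have h1 : (starRingEnd ℂ) zeta = -1 - zeta := by
    simp only [zeta, map_div₀, map_add, map_neg, map_one, map_mul, Complex.conj_ofReal,
      Complex.conj_I, map_ofNat]
    ring
  rw [h1]; linear_combination -zeta_key

lemma zeta_ne_one : zeta ≠ 1 := by
  intro h
  have := zeta_key; rw [h] at this; norm_num at this

lemma zeta_ne_neg_one : zeta ≠ -1 := by
  intro h
  have := zeta_key; rw [h] at this; norm_num at this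

lemma zeta_sq_ne_one : zeta ^ 2 ≠ 1 := by
  intro h
  have hk := zeta_key
  have hz : zeta = -2 := by linear_combination hk - h
  rw [hz] at h; norm_num at h

lemma zeta_ne_zeta_sq : zeta ≠ zeta ^ 2 := by
  intro h
  have hk := zeta_key
  have h2 : 2 * zeta + 1 = 0 := by linear_combination h + hk
  have hz : zeta = -(1/2) := by linear_combination (1/2) * h2
  rw [hz] at h; norm_num at h


lemma one_mem_steps : (1 : ℂ) ∈ steps := Or.inl rfl

lemma steps_cube {x : ℂ} (h : x ∈ steps) : x ^ 3 = 1 := by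
  rcases h with h | h | h <;> subst h
  · norm_num
  · exact zeta_cube
  · rw [← pow_mul]
    have : zeta ^ (2 * 3) = (zeta ^ 3) ^ 2 := by ring
    rw [this, zeta_cube, one_pow]

lemma zeta_pow_four : zeta ^ 4 = zeta := by
  have : zeta ^ 4 = zeta ^ 3 * zeta := by ring
  rw [this, zeta_cube, one_mul]

lemma conj_steps {x : ℂ} (h : x ∈ steps) : (starRingEnd ℂ) x = x ^ 2 := by
  rcases h with h | h | h <;> subst h
  · simp
  · exact conj_zeta
  · rw [map_pow, conj_zeta, ← pow_mul]

lemma steps_mul {x y : ℂ} (hx : x ∈ steps) (hy : y ∈ steps) : x * y ∈ steps := by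
  rcases hx with h | h | h <;> rcases hy with h' | h' | h' <;> subst h <;> subst h' <;>
    simp only [steps, Set.mem_insert_iff, Set.mem_singleton_iff, one_mul, mul_one]
  · left; trivial
  · right; left; trivial
  · right; right; trivial
  · right; left; trivial
  · right; right; exact (sq zeta).symm
  · left; rw [← pow_succ']; exact zeta_cube
  · right; right; trivial
  · left; rw [← pow_succ]; exact zeta_cube
  · right; left; rw [← pow_add]; exact zeta_pow_four

lemma steps_conj {x : ℂ} (h : x ∈ steps) : (starRingEnd ℂ) x ∈ steps := by
  rw [conj_steps h, sq]; exact steps_mul h h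

lemma steps_pow {x : ℂ} (h : x ∈ steps) (n : ℕ) : x ^ n ∈ steps := by
  induction n with
  | zero => simpa using one_mem_steps
  | succ n ih => rw [pow_succ]; exact steps_mul ih h

lemma steps_ne_zero {x : ℂ} (h : x ∈ steps) : x ≠ 0 := by
  intro h0
  have := steps_cube h
  rw [h0] at this; norm_num at this

lemma pow_mod3 {x : ℂ} (hx : x ^ 3 = 1) (n : ℕ) : x ^ n = x ^ (n % 3) := by
  conv_lhs => rw [← Nat.mod_add_div n 3]
  rw [pow_add, pow_mul, hx, one_pow, mul_one]



lemma trip_mem (a : Fin 3) : trip a ∈ steps := by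
  fin_cases a <;> simp [trip, steps]

lemma trip_ne {b b' : Fin 3} (h : b ≠ b') : trip b ≠ trip b' := by
  fin_cases b <;> fin_cases b' <;> simp_all [trip] <;>
    first
      | exact Ne.symm zeta_ne_one
      | exact zeta_ne_one
      | exact Ne.symm zeta_sq_ne_one
      | exact zeta_sq_ne_one
      | exact zeta_ne_zeta_sq
      | exact Ne.symm zeta_ne_zeta_sq
      | exact ⟨zeta_ne_one, zeta_ne_neg_one⟩

lemma deltaFactor (a : Fin 3) {d : ℂ} (hd : d ∈ steps) :
    (if trip a = zeta then d else if trip a = zeta ^ 2 then (starRingEnd ℂ) d else 1)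
      = d ^ (a : ℕ) := by
  fin_cases a <;>
    simp [trip, Ne.symm zeta_ne_one, Ne.symm zeta_sq_ne_one, Ne.symm zeta_ne_zeta_sq,
      conj_steps hd]

lemma steps_one_add {w : ℂ} (hw : w ∈ steps) (h1 : w ≠ 1) : 1 + w + w ^ 2 = 0 := by
  rcases hw with h | h | h
  · exact absurd h h1
  · rw [h]; linear_combination zeta_key
  · rw [h]; linear_combination zeta_key + zeta * zeta_cube

lemma trip_orth (b b' : Fin 3) :
    (∑ a : Fin 3, (starRingEnd ℂ) (trip b ^ (a : ℕ)) * trip b' ^ (a : ℕ))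
      = if b = b' then 3 else 0 := by
  have hb := trip_mem b
  have hb' := trip_mem b'
  have hterm : ∀ a : Fin 3, (starRingEnd ℂ) (trip b ^ (a : ℕ)) * trip b' ^ (a : ℕ)
      = ((starRingEnd ℂ) (trip b) * trip b') ^ (a : ℕ) := fun a => by
    rw [map_pow, mul_pow]
  set w := (starRingEnd ℂ) (trip b) * trip b' with hw
  rw [Fin.sum_univ_three, hterm 0, hterm 1, hterm 2]
  simp only [Fin.val_zero, Fin.val_one, pow_zero, pow_one]
  have h2 : ((2 : Fin 3) : ℕ) = 2 := rfl
  rw [h2]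
  have hx3 : (starRingEnd ℂ) (trip b) * trip b = 1 := by
    rw [conj_steps hb, ← pow_succ]; exact steps_cube hb
  by_cases h : b = b'
  · subst h
    rw [if_pos rfl, hw, hx3]
    norm_num
  · rw [if_neg h]
    have hw1 : w ≠ 1 := by
      intro h1
      refine trip_ne h ?_
      have hnz : (starRingEnd ℂ) (trip b) ≠ 0 := steps_ne_zero (steps_conj hb)
      exact (mul_left_cancel₀ hnz (hx3.trans h1.symm))
    have hws : w ∈ steps := steps_mul (steps_conj hb) hb'
    linear_combination steps_one_add hws hw1



variable {Ω : Type*} {mΩ : MeasurableSpace Ω}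


lemma steps_prod {ι : Type*} {s : Finset ι} {f : ι → ℂ} (h : ∀ i ∈ s, f i ∈ steps) :
    ∏ i ∈ s, f i ∈ steps :=
  Finset.prod_induction f (· ∈ steps) (fun _ _ => steps_mul) one_mem_steps h

section Walk

variable {μ : Measure Ω} [IsProbabilityMeasure μ] {ℱ : Filtration ℕ mΩ} {Z : ℕ → Ω → ℂ}

lemma integral_mul_delta (hZ : IsParisian μ ℱ Z) (u : ℕ) {G : Ω → ℂ}
    (hGm : StronglyMeasurable[ℱ u] G) (hGs : ∀ᵐ ω ∂μ, G ω ∈ steps) :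
    ∫ ω, G ω * (Z (u + 1) ω - Z u ω) ∂μ = 0 := by
  have hmart := hZ.1
  have hint1 : Integrable (Z (u + 1)) μ := hmart.integrable _
  have hint0 : Integrable (Z u) μ := hmart.integrable _
  have hg : Integrable (fun ω => Z (u + 1) ω - Z u ω) μ := hint1.sub hint0
  set A : ℂ → Set Ω := fun v => G ⁻¹' {v} with hAdef
  have hA : ∀ v, MeasurableSet[ℱ u] (A v) :=
    fun v => hGm.measurable (measurableSet_singleton v)
  have hA0 : ∀ v, MeasurableSet (A v) := fun v => ℱ.le u _ (hA v)
  have hset : ∀ v, ∫ ω in A v, (Z (u + 1) ω - Z u ω) ∂μ = 0 := by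
    intro v
    rw [integral_sub hint1.integrableOn hint0.integrableOn, sub_eq_zero]
    exact (hmart.setIntegral_eq (Nat.le_succ u) (hA v)).symm
  have hcongr : (fun ω => G ω * (Z (u + 1) ω - Z u ω)) =ᵐ[μ]
      (fun ω => ∑ v ∈ ({1, zeta, zeta ^ 2} : Finset ℂ),
        (A v).indicator (fun ω' => v * (Z (u + 1) ω' - Z u ω')) ω) := by
    filter_upwards [hGs] with ω hω
    have hω' : G ω = 1 ∨ G ω = zeta ∨ G ω = zeta ^ 2 := hω
    have hmem : G ω ∈ ({1, zeta, zeta ^ 2} : Finset ℂ) := by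
      rcases hω' with h | h | h <;> simp [h]
    rw [Finset.sum_eq_single_of_mem (G ω) hmem ?_]
    · rw [Set.indicator_of_mem (Set.mem_preimage.mpr (Set.mem_singleton _))]
    · intro v _ hne
      exact Set.indicator_of_notMem (fun h => hne h.symm) _
  rw [integral_congr_ae hcongr, integral_finset_sum]
  · refine Finset.sum_eq_zero fun v _ => ?_
    rw [integral_indicator (hA0 v), integral_const_mul, hset v, mul_zero]
  · intro v _
    exact (hg.const_mul v).indicator (hA0 v)

lemma integral_mul_delta_conj (hZ : IsParisian μ ℱ Z) (u : ℕ) {G : Ω → ℂ}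
    (hGm : StronglyMeasurable[ℱ u] G) (hGs : ∀ᵐ ω ∂μ, G ω ∈ steps) :
    ∫ ω, G ω * (starRingEnd ℂ) (Z (u + 1) ω - Z u ω) ∂μ = 0 := by
  have h0 : ∫ ω, (starRingEnd ℂ) (G ω) * (Z (u + 1) ω - Z u ω) ∂μ = 0 :=
    integral_mul_delta hZ u (Complex.continuous_conj.comp_stronglyMeasurable hGm)
      (hGs.mono fun ω h => steps_conj h)
  have : (fun ω => G ω * (starRingEnd ℂ) (Z (u + 1) ω - Z u ω)) =
      fun ω => (starRingEnd ℂ) ((starRingEnd ℂ) (G ω) * (Z (u + 1) ω - Z u ω)) := by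
    funext ω; rw [map_mul, Complex.conj_conj]
  rw [this, integral_conj, h0, map_zero]

lemma integral_prod_pow_delta (hZ : IsParisian μ ℱ Z)
    (hAE : ∀ᵐ ω ∂μ, ∀ u : ℕ, Z (u + 1) ω - Z u ω ∈ steps)
    {t : ℕ} (T : Finset (Fin t)) (hT : T.Nonempty) (e : Fin t → ℕ)
    (he : ∀ i ∈ T, e i = 1 ∨ e i = 2) :
    ∫ ω, ∏ i ∈ T, (Z ((i : ℕ) + 1) ω - Z (i : ℕ) ω) ^ e i ∂μ = 0 := by
  set m := T.max' hT with hm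
  have hmem : m ∈ T := T.max'_mem hT
  set G : Ω → ℂ := fun ω => ∏ i ∈ T.erase m, (Z ((i : ℕ) + 1) ω - Z (i : ℕ) ω) ^ e i with hG
  have hlt : ∀ i ∈ T.erase m, (i : ℕ) + 1 ≤ (m : ℕ) := by
    intro i hi
    have h1 : i ≠ m := Finset.ne_of_mem_erase hi
    have h2 : i ≤ m := T.le_max' i (Finset.mem_of_mem_erase hi)
    exact Nat.succ_le_of_lt (Fin.lt_iff_val_lt_val.mp (lt_of_le_of_ne h2 h1))
  have hGm : StronglyMeasurable[ℱ (m : ℕ)] G := by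
    refine Finset.stronglyMeasurable_fun_prod _ fun i hi => ?_
    have h1 : (i : ℕ) + 1 ≤ (m : ℕ) := hlt i hi
    exact (continuous_pow (e i)).comp_stronglyMeasurable
      (((hZ.1.stronglyAdapted ((i : ℕ) + 1)).mono (ℱ.mono h1)).sub
        ((hZ.1.stronglyAdapted (i : ℕ)).mono (ℱ.mono (le_trans (Nat.le_succ _) h1))))
  have hGs : ∀ᵐ ω ∂μ, G ω ∈ steps := by
    filter_upwards [hAE] with ω hω
    exact steps_prod fun i _ => steps_pow (hω i) _
  have hsplit : ∀ ω, ∏ i ∈ T, (Z ((i : ℕ) + 1) ω - Z (i : ℕ) ω) ^ e i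
      = G ω * (Z ((m : ℕ) + 1) ω - Z (m : ℕ) ω) ^ e m := by
    intro ω
    rw [← Finset.insert_erase hmem, Finset.prod_insert (Finset.notMem_erase _ _), mul_comm]
  simp only [hsplit]
  rcases he m hmem with h1 | h2
  · rw [h1]
    simp only [pow_one]
    exact integral_mul_delta hZ (m : ℕ) hGm hGs
  · rw [h2]
    have hc : (fun ω => G ω * (Z ((m : ℕ) + 1) ω - Z (m : ℕ) ω) ^ 2) =ᵐ[μ]
        fun ω => G ω * (starRingEnd ℂ) (Z ((m : ℕ) + 1) ω - Z (m : ℕ) ω) := by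
      filter_upwards [hAE] with ω hω
      rw [conj_steps (hω (m : ℕ))]
    rw [integral_congr_ae hc]
    exact integral_mul_delta_conj hZ (m : ℕ) hGm hGs



lemma deltaZS_eq {Z : ℕ → Ω → ℂ} {t : ℕ} (S : Fin t → Fin 3) (ω : Ω)
    (hω : ∀ u : ℕ, Z (u + 1) ω - Z u ω ∈ steps) :
    deltaZS Z t (trip ∘ S) ω = ∏ i : Fin t, (Z ((i : ℕ) + 1) ω - Z (i : ℕ) ω) ^ ((S i : ℕ)) := by
  unfold deltaZS
  simp only [Function.comp]
  exact Finset.prod_congr rfl fun i _ => deltaFactor (S i) (hω (i : ℕ))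

lemma ortho {μ : Measure Ω} [IsProbabilityMeasure μ] {ℱ : Filtration ℕ mΩ} {Z : ℕ → Ω → ℂ}
    (hZ : IsParisian μ ℱ Z)
    (hAE : ∀ᵐ ω ∂μ, ∀ u : ℕ, Z (u + 1) ω - Z u ω ∈ steps)
    (t : ℕ) (S S' : Fin t → Fin 3) :
    ∫ ω, deltaZS Z t (trip ∘ S) ω * starRingEnd ℂ (deltaZS Z t (trip ∘ S') ω) ∂μ
      = if S = S' then 1 else 0 := by
  set e : Fin t → ℕ := fun i => ((S i : ℕ) + 2 * (S' i : ℕ)) % 3 with he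
  have hpoint : ∀ ω, (∀ u : ℕ, Z (u + 1) ω - Z u ω ∈ steps) →
      deltaZS Z t (trip ∘ S) ω * (starRingEnd ℂ) (deltaZS Z t (trip ∘ S') ω)
        = ∏ i : Fin t, (Z ((i : ℕ) + 1) ω - Z (i : ℕ) ω) ^ e i := by
    intro ω hω
    rw [deltaZS_eq S ω hω, deltaZS_eq S' ω hω, map_prod, ← Finset.prod_mul_distrib]
    refine Finset.prod_congr rfl fun i _ => ?_
    have hd : Z ((i : ℕ) + 1) ω - Z (i : ℕ) ω ∈ steps := hω (i : ℕ)
    rw [map_pow, conj_steps hd, ← pow_mul, ← pow_add, pow_mod3 (steps_cube hd)]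
  by_cases hSS : S = S'
  · subst hSS
    rw [if_pos rfl]
    have h1 : (fun ω => deltaZS Z t (trip ∘ S) ω * (starRingEnd ℂ) (deltaZS Z t (trip ∘ S) ω))
        =ᵐ[μ] fun _ => (1 : ℂ) := by
      filter_upwards [hAE] with ω hω
      rw [hpoint ω hω]
      refine Finset.prod_eq_one fun i _ => ?_
      have h0 : e i = 0 := by simp only [he]; omega
      rw [h0, pow_zero]
    rw [integral_congr_ae h1]
    simp
  · rw [if_neg hSS]
    set T := Finset.univ.filter (fun i : Fin t => S i ≠ S' i) with hTdef
    have hT : T.Nonempty := by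
      obtain ⟨i, hi⟩ := Function.ne_iff.mp hSS
      exact ⟨i, Finset.mem_filter.mpr ⟨Finset.mem_univ _, hi⟩⟩
    have he12 : ∀ i ∈ T, e i = 1 ∨ e i = 2 := by
      intro i hi
      have hne : S i ≠ S' i := (Finset.mem_filter.mp hi).2
      have hv : (S i : ℕ) ≠ (S' i : ℕ) := fun h => hne (Fin.val_injective h)
      have h3 : (S i : ℕ) < 3 := (S i).isLt
      have h3' : (S' i : ℕ) < 3 := (S' i).isLt
      simp only [he]; omega
    have h2 : (fun ω => deltaZS Z t (trip ∘ S) ω * (starRingEnd ℂ) (deltaZS Z t (trip ∘ S') ω))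
        =ᵐ[μ] fun ω => ∏ i ∈ T, (Z ((i : ℕ) + 1) ω - Z (i : ℕ) ω) ^ e i := by
      filter_upwards [hAE] with ω hω
      rw [hpoint ω hω]
      symm
      refine Finset.prod_subset (Finset.subset_univ T) fun i _ hiT => ?_
      have hSi : S i = S' i := by
        by_contra hc
        exact hiT (Finset.mem_filter.mpr ⟨Finset.mem_univ _, hc⟩)
      have h0 : e i = 0 := by simp only [he, hSi]; omega
      rw [h0, pow_zero]
    rw [integral_congr_ae h2]
    exact integral_prod_pow_delta hZ hAE T hT e he12


lemma mem_steps_exists {x : ℂ} (h : x ∈ steps) : ∃ a : Fin 3, trip a = x := by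
  have h' : x = 1 ∨ x = zeta ∨ x = zeta ^ 2 := h
  rcases h' with h | h | h
  · exact ⟨0, by simp [trip, h]⟩
  · exact ⟨1, by simp [trip, h]⟩
  · exact ⟨2, by simp [trip, h]⟩

lemma complete {μ : Measure Ω} {ℱ : Filtration ℕ mΩ} {Z : ℕ → Ω → ℂ}
    (hAE : ∀ᵐ ω ∂μ, ∀ u : ℕ, Z (u + 1) ω - Z u ω ∈ steps)
    (z0 : ℂ) (hz0 : ∀ ω, Z 0 ω = z0)
    (hnat : ∀ t : ℕ, (ℱ t : MeasurableSpace Ω)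
      = ⨆ s ∈ Set.Iic t, MeasurableSpace.comap (Z s) inferInstance)
    (t : ℕ) (f : Ω → ℂ) (hf : StronglyMeasurable[ℱ t] f) :
    ∃ c : (Fin t → Fin 3) → ℂ,
      f =ᵐ[μ] fun ω => ∑ S : Fin t → Fin 3, c S * deltaZS Z t (trip ∘ S) ω := by
  set D : Ω → (Fin t → ℂ) := fun ω i => Z ((i : ℕ) + 1) ω - Z (i : ℕ) ω with hD
  have hle : (ℱ t : MeasurableSpace Ω) ≤ MeasurableSpace.comap D inferInstance := by
    rw [hnat t]
    refine iSup₂_le fun s hs => ?_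
    set g : (Fin t → ℂ) → ℂ :=
      fun v => z0 + ∑ i ∈ Finset.range s, (if h : i < t then v ⟨i, h⟩ else 0) with hg
    have hmeas : Measurable g := by
      refine measurable_const.add (Finset.measurable_sum _ fun i _ => ?_)
      by_cases h : i < t
      · simpa [h] using measurable_pi_apply (⟨i, h⟩ : Fin t)
      · simpa [h] using measurable_const
    have hZs : Z s = g ∘ D := by
      funext ω
      have htel : ∑ i ∈ Finset.range s, (Z (i + 1) ω - Z i ω) = Z s ω - Z 0 ω :=
        Finset.sum_range_sub (fun i => Z i ω) s
      show Z s ω = g (D ω)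
      have hterm : ∀ i ∈ Finset.range s,
          (if h : i < t then D ω ⟨i, h⟩ else 0) = Z (i + 1) ω - Z i ω := by
        intro i hi
        rw [dif_pos (lt_of_lt_of_le (Finset.mem_range.mp hi) hs)]
      rw [hg]
      simp only []
      rw [Finset.sum_congr rfl hterm, htel, hz0]
      ring
    rw [hZs, ← MeasurableSpace.comap_comp]
    exact MeasurableSpace.comap_mono hmeas.comap_le
  have hfm : Measurable[MeasurableSpace.comap D inferInstance] f :=
    hf.measurable.mono hle le_rfl
  have hfiber : ∀ ω ω', D ω = D ω' → f ω = f ω' := by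
    intro ω ω' hDD
    obtain ⟨s, -, hs⟩ :=
      MeasurableSpace.measurableSet_comap.mp (hfm (measurableSet_singleton (f ω)))
    have h1 : ω ∈ D ⁻¹' s := by rw [hs]; exact rfl
    have h2 : ω' ∈ D ⁻¹' s := by rw [Set.mem_preimage, ← hDD]; exact h1
    rw [hs] at h2
    exact (h2 : f ω' = f ω).symm
  set g0 : (Fin t → ℂ) → ℂ := fun v => if h : ∃ ω, D ω = v then f h.choose else 0 with hg0
  have hfg : ∀ ω, f ω = g0 (D ω) := by
    intro ω
    have hex : ∃ ω', D ω' = D ω := ⟨ω, rfl⟩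
    rw [hg0]
    simp only []
    rw [dif_pos hex]
    exact hfiber ω hex.choose hex.choose_spec.symm
  set M : (Fin t → Fin 3) → (Fin t → Fin 3) → ℂ :=
    fun S S' => ∏ i, trip (S' i) ^ (S i : ℕ) with hM
  set c : (Fin t → Fin 3) → ℂ :=
    fun S => (1/3 : ℂ) ^ t * ∑ S' : Fin t → Fin 3,
      (starRingEnd ℂ) (M S S') * g0 (trip ∘ S') with hc
  have horth : ∀ S' S'' : Fin t → Fin 3,
      (∑ S : Fin t → Fin 3, (starRingEnd ℂ) (M S S') * M S S'')
        = if S' = S'' then (3 : ℂ) ^ t else 0 := by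
    intro S' S''
    set h : Fin t → Fin 3 → ℂ :=
      fun i a => (starRingEnd ℂ) (trip (S' i) ^ (a : ℕ)) * trip (S'' i) ^ (a : ℕ) with hh
    have h1 : ∀ S : Fin t → Fin 3, (starRingEnd ℂ) (M S S') * M S S'' = ∏ i, h i (S i) := by
      intro S
      rw [hM, hh]
      simp only []
      rw [map_prod, ← Finset.prod_mul_distrib]
    have h2 : ∑ S : Fin t → Fin 3, ∏ i, h i (S i) = ∏ i, ∑ a : Fin 3, h i a := by
      rw [← Fintype.piFinset_univ]
      exact (Finset.prod_univ_sum _ h).symm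
    rw [Finset.sum_congr rfl fun S _ => h1 S, h2]
    have h3 : ∀ i : Fin t, ∑ a : Fin 3, h i a = if S' i = S'' i then 3 else 0 := by
      intro i
      rw [hh]
      exact trip_orth (S' i) (S'' i)
    rw [Finset.prod_congr rfl fun i _ => h3 i]
    by_cases h : S' = S''
    · subst h
      simp [Finset.prod_const]
    · rw [if_neg h]
      obtain ⟨i, hi⟩ := Function.ne_iff.mp h
      exact Finset.prod_eq_zero (Finset.mem_univ i) (by rw [if_neg hi])
  refine ⟨c, ?_⟩
  filter_upwards [hAE] with ω hω
  set S'' : Fin t → Fin 3 := fun i => (mem_steps_exists (hω (i : ℕ))).choose with hS''def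
  have hS'' : trip ∘ S'' = D ω := funext fun i => (mem_steps_exists (hω (i : ℕ))).choose_spec
  have hdel : ∀ S : Fin t → Fin 3, deltaZS Z t (trip ∘ S) ω = M S S'' := by
    intro S
    rw [deltaZS_eq S ω hω, hM]
    refine Finset.prod_congr rfl fun i _ => ?_
    rw [show Z ((i : ℕ) + 1) ω - Z (i : ℕ) ω = trip (S'' i) from (congrFun hS'' i).symm]
  have hsum : ∑ S : Fin t → Fin 3, c S * deltaZS Z t (trip ∘ S) ω = g0 (trip ∘ S'') := by
    rw [Finset.sum_congr rfl fun S _ => by rw [hdel S]]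
    have hterm : ∀ S : Fin t → Fin 3, c S * M S S''
        = (1/3 : ℂ) ^ t * ∑ S' : Fin t → Fin 3,
            ((starRingEnd ℂ) (M S S') * M S S'') * g0 (trip ∘ S') := by
      intro S
      rw [hc]
      simp only []
      rw [mul_assoc, Finset.sum_mul]
      congr 1
      refine Finset.sum_congr rfl fun S' _ => ?_
      ring
    rw [Finset.sum_congr rfl fun S _ => hterm S, ← Finset.mul_sum, Finset.sum_comm]
    have hinner : ∀ S' : Fin t → Fin 3,
        (∑ S : Fin t → Fin 3, ((starRingEnd ℂ) (M S S') * M S S'') * g0 (trip ∘ S'))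
          = (if S' = S'' then (3 : ℂ) ^ t else 0) * g0 (trip ∘ S') := by
      intro S'
      rw [← Finset.sum_mul, horth S' S'']
    rw [Finset.sum_congr rfl fun S' _ => hinner S']
    have : ∀ S' : Fin t → Fin 3, (if S' = S'' then (3 : ℂ) ^ t else 0) * g0 (trip ∘ S')
        = if S' = S'' then (3 : ℂ) ^ t * g0 (trip ∘ S') else 0 := by
      intro S'
      split <;> simp
    rw [Finset.sum_congr rfl fun S' _ => this S', Finset.sum_ite_eq' Finset.univ S'']
    rw [if_pos (Finset.mem_univ _), ← mul_assoc, ← mul_pow]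
    norm_num
  rw [hfg ω, hsum, hS'']

end Walk

end Aux

/-- For a Parisian walk with deterministic start and natural filtration, the family
`{ΔZ_S : S ∈ {1, ζ, ζ²}^t}` is an orthonormal basis of `L²(Ω, ℱ_t, P; ℂ)`:
it is orthonormal, and every `ℱ_t`-measurable square-integrable function is
(a.e.) a linear combination of the `3^t` functions `ΔZ_S`. -/
theorem deltaZS_orthonormal_basis
    {Ω : Type*} {mΩ : MeasurableSpace Ω} (μ : Measure Ω) [IsProbabilityMeasure μ]
    (ℱ : Filtration ℕ mΩ) (Z : ℕ → Ω → ℂ) (hZ : IsParisian μ ℱ Z)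
    (z0 : ℂ) (hz0 : ∀ ω, Z 0 ω = z0)
    (hnat : ∀ t : ℕ, (ℱ t : MeasurableSpace Ω)
      = ⨆ s ∈ Set.Iic t, MeasurableSpace.comap (Z s) inferInstance)
    (t : ℕ) :
    (∀ S S' : Fin t → Fin 3,
      ∫ ω, deltaZS Z t (trip ∘ S) ω * starRingEnd ℂ (deltaZS Z t (trip ∘ S') ω) ∂μ
        = if S = S' then 1 else 0) ∧
    (∀ f : Ω → ℂ, StronglyMeasurable[ℱ t] f → MemLp f 2 μ →
      ∃ c : (Fin t → Fin 3) → ℂ,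
        f =ᵐ[μ] fun ω => ∑ S : Fin t → Fin 3, c S * deltaZS Z t (trip ∘ S) ω) := by
  constructor
  · intro S S'
    exact ortho hZ (ae_all_iff.mpr hZ.2.2) t S S'
  · intro f hf _
    exact complete (ae_all_iff.mpr hZ.2.2) z0 hz0 hnat t f hf

end Parisian
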